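/- Let d ≥ 1 be an integer, T ≥ 1 a real number, and let P₀ ⪯ P₁ ⪯ ⋯ ⪯ P_L be d×d positive definite Hermitian matrices with P₀ = d·I_d and P_L ⪯ T²·I_d. Then Σ_{τ=1}^{L} Tr(P_τ^{-1}(P_τ − P_{τ−1})) ≤ 2d·log T. -/

import Mathlib

open Matrix
open scoped ComplexOrder

private lemma trace_eq_sum_eig {n : ℕ} {M : Matrix (Fin n) (Fin n) ℂ} (hM : M.IsHermitian) :
    M.trace = ∑ i, (hM.eigenvalues i : ℂ) := by
  conv_lhs => rw [hM.spectral_theorem, Unitary.conjStarAlgAut_apply]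
  rw [Matrix.trace_mul_cycle, Unitary.coe_star_mul_self, one_mul, Matrix.trace_diagonal]
  simp

private lemma det_re_pos {n : ℕ} {M : Matrix (Fin n) (Fin n) ℂ} (hM : M.PosDef) :
    0 < M.det.re ∧ M.det = (M.det.re : ℂ) := by
  have h := hM.det_pos
  rw [Complex.lt_def] at h
  exact ⟨by simpa using h.1, by apply Complex.ext <;> simp [h.2.symm]⟩

open scoped MatrixOrder in
/-- Key inequality: for PD `A, B`, `Tr(A⁻¹(A-B)).re ≤ log det A - log det B`. -/
private lemma key {n : ℕ} {A B : Matrix (Fin n) (Fin n) ℂ}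
    (hA : A.PosDef) (hB : B.PosDef) :
    (A⁻¹ * (A - B)).trace.re ≤ Real.log A.det.re - Real.log B.det.re := by
  obtain ⟨hAre, hAeq⟩ := det_re_pos hA
  obtain ⟨hBre, hBeq⟩ := det_re_pos hB
  set S := CFC.sqrt A with hSdef
  have hSpsd : S.PosSemidef := (CFC.sqrt_nonneg A).posSemidef
  have hSH : S.IsHermitian := hSpsd.1
  have hSS : S * S = A := CFC.sqrt_mul_sqrt_self A hA.posSemidef.nonneg
  have hdetA : A.det ≠ 0 := hA.det_pos.ne'
  have hdetS : S.det ≠ 0 := by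
    intro h
    apply hdetA
    rw [← hSS, Matrix.det_mul, h, mul_zero]
  have hSu : IsUnit S.det := hdetS.isUnit
  -- the conjugated matrix
  set C := S⁻¹ * B * S⁻¹ with hCdef
  have hSinvH : (S⁻¹).conjTranspose = S⁻¹ := by
    rw [Matrix.conjTranspose_nonsing_inv, hSH.eq]
  have hCpsd : C.PosSemidef := by
    have := hB.posSemidef.mul_mul_conjTranspose_same S⁻¹
    rwa [hSinvH] at this
  -- A⁻¹ = S⁻¹ * S⁻¹ and the trace identity
  have hAinv : A⁻¹ = S⁻¹ * S⁻¹ := by rw [← hSS, Matrix.mul_inv_rev]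
  have h1 : S⁻¹ * A * S⁻¹ = 1 := by
    rw [← hSS, ← mul_assoc, Matrix.nonsing_inv_mul S hSu, one_mul, Matrix.mul_nonsing_inv S hSu]
  have hmat : S⁻¹ * (A - B) * S⁻¹ = 1 - C := by
    have : S⁻¹ * (A - B) * S⁻¹ = S⁻¹ * A * S⁻¹ - S⁻¹ * B * S⁻¹ := by noncomm_ring
    rw [this, h1, hCdef]
  have htr : (A⁻¹ * (A - B)).trace = (1 - C).trace := by
    rw [hAinv, mul_assoc, Matrix.trace_mul_comm, hmat]
  -- eigenvalues of C
  set μ := hCpsd.1.eigenvalues with hμdef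
  have hdetC : C.det = B.det / A.det := by
    rw [hCdef, Matrix.det_mul, Matrix.det_mul, Matrix.det_nonsing_inv, ← hSS, Matrix.det_mul]
    field_simp
    rw [Ring.inverse_eq_inv']
    field_simp
  have hCdet : C.det = ∏ i, (μ i : ℂ) := hCpsd.1.det_eq_prod_eigenvalues
  have hprod : (∏ i, μ i) = B.det.re / A.det.re := by
    have : ((∏ i, μ i : ℝ) : ℂ) = ((B.det.re / A.det.re : ℝ) : ℂ) := by
      calc ((∏ i, μ i : ℝ) : ℂ) = ∏ i, ((μ i : ℝ) : ℂ) := by push_cast; rfl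
        _ = C.det := hCdet.symm
        _ = B.det / A.det := hdetC
        _ = ((B.det.re / A.det.re : ℝ) : ℂ) := by
            rw [Complex.ofReal_div, ← hAeq, ← hBeq]
    exact_mod_cast this
  have hμpos : ∀ i, 0 < μ i := by
    intro i
    rcases lt_or_eq_of_le (hCpsd.eigenvalues_nonneg i) with h | h
    · exact h
    · exfalso
      have : (∏ i, μ i) = 0 := Finset.prod_eq_zero (Finset.mem_univ i) h.symm
      rw [hprod] at this
      exact absurd this (div_ne_zero hBre.ne' hAre.ne')
  -- trace of C
  have htrC : C.trace.re = ∑ i, μ i := by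
    rw [trace_eq_sum_eig hCpsd.1]
    push_cast
    simp
    rfl
  have hlhs : (A⁻¹ * (A - B)).trace.re = ∑ i, (1 - μ i) := by
    rw [htr, Matrix.trace_sub, Matrix.trace_one]
    simp only [Complex.sub_re]
    rw [Finset.sum_sub_distrib]
    simp [htrC]
  rw [hlhs]
  have hrhs : Real.log A.det.re - Real.log B.det.re = ∑ i, (-Real.log (μ i)) := by
    have : Real.log B.det.re = Real.log A.det.re + ∑ i, Real.log (μ i) := by
      have hB' : B.det.re = A.det.re * ∏ i, μ i := by
        rw [hprod]; field_simp
      rw [hB', Real.log_mul hAre.ne' (Finset.prod_pos fun i _ => hμpos i).ne', Real.log_prod]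
      intro i _
      exact (hμpos i).ne'
    rw [this]
    rw [Finset.sum_neg_distrib]
    ring
  rw [hrhs]
  apply Finset.sum_le_sum
  intro i _
  have := Real.log_le_sub_one_of_pos (hμpos i)
  linarith

/-- Let `d ≥ 1`, `T ≥ 1` real, and `P₀ ⪯ P₁ ⪯ ⋯ ⪯ P_L` PD Hermitian with
`P₀ = d·I` and `P_L ⪯ T²·I`. Then `Σ_{τ=1}^{L} Tr(P_τ⁻¹(P_τ − P_{τ−1})) ≤ 2d·log T`. -/
theorem stmt10 (d : ℕ) (hd : 1 ≤ d) (T : ℝ) (hT : 1 ≤ T) (L : ℕ)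
    (P : ℕ → Matrix (Fin d) (Fin d) ℂ)
    (hpd : ∀ τ, τ ≤ L → (P τ).PosDef)
    (hmono : ∀ τ, τ < L → (P (τ + 1) - P τ).PosSemidef)
    (hP0 : P 0 = (d : ℂ) • (1 : Matrix (Fin d) (Fin d) ℂ))
    (hPL : ((T ^ 2) • (1 : Matrix (Fin d) (Fin d) ℂ) - P L).PosSemidef) :
    ∑ τ ∈ Finset.Icc 1 L, ((P τ)⁻¹ * (P τ - P (τ - 1))).trace.re ≤
      2 * d * Real.log T := by
  have hTpos : (0:ℝ) < T := lt_of_lt_of_le one_pos hT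
  set f : ℕ → ℝ := fun τ => Real.log (P τ).det.re with hf
  -- step 1: the sum telescopes
  have hstep : ∑ τ ∈ Finset.Icc 1 L, ((P τ)⁻¹ * (P τ - P (τ - 1))).trace.re ≤ f L - f 0 := by
    calc ∑ τ ∈ Finset.Icc 1 L, ((P τ)⁻¹ * (P τ - P (τ - 1))).trace.re
        ≤ ∑ τ ∈ Finset.Icc 1 L, (f τ - f (τ - 1)) := by
          apply Finset.sum_le_sum
          intro τ hτ
          rw [Finset.mem_Icc] at hτ
          exact key (hpd τ hτ.2) (hpd (τ - 1) (le_trans (Nat.sub_le _ _) hτ.2))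
      _ = f L - f 0 := by
          have : Finset.Icc 1 L = Finset.Ico 1 (L + 1) := by
            rw [Finset.Ico_add_one_right_eq_Icc]
          rw [this, Finset.sum_Ico_eq_sum_range]
          simp only [Nat.add_sub_cancel]
          have : ∀ i, f (1 + i) - f (1 + i - 1) = f (i + 1) - f i := by
            intro i
            congr 2 <;> omega
          rw [Finset.sum_congr rfl fun i _ => this i, Finset.sum_range_sub]
  -- the scalar matrix T² • 1
  set c : ℂ := (T:ℂ)^2 with hc
  have hsm : (T ^ 2 : ℝ) • (1 : Matrix (Fin d) (Fin d) ℂ) = c • (1 : Matrix (Fin d) (Fin d) ℂ) := by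
    have h2 : c = (((T ^ 2 : ℝ)) : ℂ) := by rw [hc]; push_cast; ring
    ext i j
    rw [Matrix.smul_apply, Matrix.smul_apply, h2, Complex.real_smul, smul_eq_mul]
  have hcpos : (0:ℂ) < c := by
    rw [hc]
    have : (0:ℂ) < (T:ℂ) := by
      rw [Complex.lt_def]; simp [hTpos]
    positivity
  have hApd : (c • (1 : Matrix (Fin d) (Fin d) ℂ)).PosDef := by
    rw [Matrix.smul_one_eq_diagonal]
    exact Matrix.PosDef.diagonal fun _ => hcpos
  -- step 2 : f L ≤ 2 d log T
  have hdetA : (c • (1 : Matrix (Fin d) (Fin d) ℂ)).det = ((T:ℂ)^2)^d := by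
    rw [Matrix.det_smul, Matrix.det_one, mul_one, hc]
    simp
  have hdetAre : (c • (1 : Matrix (Fin d) (Fin d) ℂ)).det.re = (T^2)^d := by
    rw [hdetA]
    have : ((T:ℂ)^2)^d = (((T^2)^d : ℝ) : ℂ) := by push_cast; ring
    rw [this, Complex.ofReal_re]
  have hnonneg : 0 ≤ ((c • (1 : Matrix (Fin d) (Fin d) ℂ))⁻¹ *
      (c • (1 : Matrix (Fin d) (Fin d) ℂ) - P L)).trace.re := by
    have hinv : (c • (1 : Matrix (Fin d) (Fin d) ℂ))⁻¹ = c⁻¹ • 1 := by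
      apply Matrix.inv_eq_right_inv
      rw [Matrix.smul_mul, Matrix.mul_smul, one_mul, smul_smul, mul_inv_cancel₀ hcpos.ne', one_smul]
    rw [hinv, Matrix.smul_mul, one_mul, Matrix.trace_smul]
    set D := c • (1 : Matrix (Fin d) (Fin d) ℂ) - P L with hD
    have hDpsd : D.PosSemidef := by rw [hD, ← hsm]; exact hPL
    have htrD : 0 ≤ D.trace.re := by
      rw [trace_eq_sum_eig hDpsd.1]
      have : (∑ i, (hDpsd.1.eigenvalues i : ℂ)).re = ∑ i, hDpsd.1.eigenvalues i := by
        push_cast; simp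
      rw [this]
      exact Finset.sum_nonneg fun i _ => hDpsd.eigenvalues_nonneg i
    have hcinv : c⁻¹ = (((T^2)⁻¹ : ℝ) : ℂ) := by rw [hc]; push_cast; ring
    rw [hcinv, smul_eq_mul, Complex.re_ofReal_mul]
    exact mul_nonneg (by positivity) htrD
  have hfL : f L ≤ 2 * d * Real.log T := by
    have hk := key hApd (hpd L le_rfl)
    have h1 : 0 ≤ Real.log (c • (1 : Matrix (Fin d) (Fin d) ℂ)).det.re - f L :=
      le_trans hnonneg hk
    have h2 : Real.log (c • (1 : Matrix (Fin d) (Fin d) ℂ)).det.re = 2 * d * Real.log T := by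
      rw [hdetAre, Real.log_pow, Real.log_pow]
      push_cast; ring
    linarith
  -- step 3 : 0 ≤ f 0
  have hf0 : 0 ≤ f 0 := by
    have : (P 0).det = ((d:ℂ))^d := by
      rw [hP0, Matrix.det_smul, Matrix.det_one, mul_one]
      simp
    have hre : (P 0).det.re = (d:ℝ)^d := by
      rw [this]
      have : ((d:ℂ))^d = (((d:ℝ)^d : ℝ) : ℂ) := by push_cast; ring
      rw [this, Complex.ofReal_re]
    show (0:ℝ) ≤ Real.log (P 0).det.re
    rw [hre]
    apply Real.log_nonneg
    exact one_le_pow₀ (by exact_mod_cast hd)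
  linarith
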